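/- For n ≥ 2, the number of unlabelled cographs on n vertices equals twice the number of unlabelled unordered rooted trees with n leaves in which every internal vertex has outdegree at least 2. -/

import Mathlib

/-! Unlabelled unordered rooted trees with all internal outdegrees ≥ 2,
counted by leaves, versus unlabelled cographs, counted by vertices. -/

/-- Plane rooted trees (`node []` is a leaf). -/
inductive PT : Type
  | node : List PT → PT

namespace PT

/-- Number of leaves. -/
def leafCount : PT → ℕ
  | .node l => max 1 ((l.attach.map fun x => leafCount x.1).sum)
  decreasing_by
    cases x with | mk a h => have := List.sizeOf_lt_of_mem h; simp; omega

/-- Every internal vertex has outdegree at least 2. -/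
inductive Good : PT → Prop
  | node (l : List PT) : (l = [] ∨ 2 ≤ l.length) → (∀ t ∈ l, Good t) → Good (.node l)

/-- Two plane trees represent the same unordered rooted tree. -/
inductive Equiv : PT → PT → Prop
  | mk {l l' l'' : List PT} : List.Forall₂ Equiv l l'' → l''.Perm l' → Equiv (.node l) (.node l')

end PT

/-- The number of unlabelled unordered rooted trees with `n` leaves in which every
internal vertex has outdegree at least 2. -/
noncomputable def treeCount (n : ℕ) : ℕ :=
  Nat.card (Quot fun s t : {t : PT // t.Good ∧ t.leafCount = n} => PT.Equiv s.1 t.1)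

/-- Disjoint union of two simple graphs on `Fin m` and `Fin n`. -/
def disjUnionGraph {m n : ℕ} (G : SimpleGraph (Fin m)) (H : SimpleGraph (Fin n)) :
    SimpleGraph (Fin (m + n)) :=
  SimpleGraph.comap (finSumFinEquiv.symm)
    (G.map (Function.Embedding.inl) ⊔ H.map (Function.Embedding.inr))

/-- Cographs: the smallest class of graphs containing the one-vertex graph and closed
under complementation and disjoint union. -/
inductive IsCograph : ∀ {n : ℕ}, SimpleGraph (Fin n) → Prop
  | single : IsCograph (⊥ : SimpleGraph (Fin 1))
  | compl {n : ℕ} {G : SimpleGraph (Fin n)} : IsCograph G → IsCograph Gᶜ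
  | union {m n : ℕ} {G : SimpleGraph (Fin m)} {H : SimpleGraph (Fin n)} :
      IsCograph G → IsCograph H → IsCograph (disjUnionGraph G H)

/-- The number of unlabelled cographs on `n` vertices. -/
noncomputable def cographCount (n : ℕ) : ℕ :=
  Nat.card (Quot fun G H : {G : SimpleGraph (Fin n) // IsCograph G} => Nonempty (G.1 ≃g H.1))

/-! ### Auxiliary development -/

/-- A bundled simple graph. -/
abbrev SG := (V : Type) × SimpleGraph V

/-- Disjoint sum of graphs. -/
def sumG {V W : Type} (G : SimpleGraph V) (H : SimpleGraph W) : SimpleGraph (V ⊕ W) where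
  Adj x y := match x, y with
    | .inl a, .inl b => G.Adj a b
    | .inr a, .inr b => H.Adj a b
    | _, _ => False
  symm := ⟨by rintro (a|a) (b|b) h <;> simp_all <;> exact h.symm⟩
  loopless := ⟨by rintro (a|a) h <;> simp_all⟩

/-- Join of graphs. -/
def joinG {V W : Type} (G : SimpleGraph V) (H : SimpleGraph W) : SimpleGraph (V ⊕ W) where
  Adj x y := match x, y with
    | .inl a, .inl b => G.Adj a b
    | .inr a, .inr b => H.Adj a b
    | _, _ => True
  symm := ⟨by rintro (a|a) (b|b) h <;> simp_all <;> exact h.symm⟩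
  loopless := ⟨by rintro (a|a) h <;> simp_all⟩

@[simp] lemma sumG_adj_inl_inl {V W} {G : SimpleGraph V} {H : SimpleGraph W} {a b : V} :
    (sumG G H).Adj (.inl a) (.inl b) ↔ G.Adj a b := Iff.rfl
@[simp] lemma sumG_adj_inr_inr {V W} {G : SimpleGraph V} {H : SimpleGraph W} {a b : W} :
    (sumG G H).Adj (.inr a) (.inr b) ↔ H.Adj a b := Iff.rfl
@[simp] lemma sumG_adj_inl_inr {V W} {G : SimpleGraph V} {H : SimpleGraph W} {a b} :
    ¬ (sumG G H).Adj (.inl a) (.inr b) := fun h => h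
@[simp] lemma sumG_adj_inr_inl {V W} {G : SimpleGraph V} {H : SimpleGraph W} {a b} :
    ¬ (sumG G H).Adj (.inr a) (.inl b) := fun h => h
@[simp] lemma joinG_adj_inl_inl {V W} {G : SimpleGraph V} {H : SimpleGraph W} {a b : V} :
    (joinG G H).Adj (.inl a) (.inl b) ↔ G.Adj a b := Iff.rfl
@[simp] lemma joinG_adj_inr_inr {V W} {G : SimpleGraph V} {H : SimpleGraph W} {a b : W} :
    (joinG G H).Adj (.inr a) (.inr b) ↔ H.Adj a b := Iff.rfl
@[simp] lemma joinG_adj_inl_inr {V W} {G : SimpleGraph V} {H : SimpleGraph W} {a b} :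
    (joinG G H).Adj (.inl a) (.inr b) := trivial
@[simp] lemma joinG_adj_inr_inl {V W} {G : SimpleGraph V} {H : SimpleGraph W} {a b} :
    (joinG G H).Adj (.inr a) (.inl b) := trivial

/-- Combine two bundled graphs: disjoint sum if `s = false`, join if `s = true`. -/
def combine (s : Bool) (p q : SG) : SG :=
  ⟨p.1 ⊕ q.1, bif s then joinG p.2 q.2 else sumG p.2 q.2⟩

/-- The cograph of a tree with a root sign. -/
def gph : PT → Bool → SG
  | .node [], _ => ⟨PUnit, ⊥⟩
  | .node [a], s => gph a (!s)
  | .node (a :: b :: l), s => combine s (gph a (!s)) (gph (.node (b :: l)) s)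
termination_by t _ => sizeOf t
decreasing_by all_goals simp <;> omega

/-- Graphs-up-to-iso relation on bundled graphs. -/
def isoSG (p q : SG) : Prop := Nonempty (p.2 ≃g q.2)

lemma isoSG_refl (p : SG) : isoSG p p := ⟨RelIso.refl _⟩
lemma isoSG_symm {p q : SG} (h : isoSG p q) : isoSG q p := h.elim fun e => ⟨e.symm⟩
lemma isoSG_trans {p q r : SG} (h : isoSG p q) (h' : isoSG q r) : isoSG p r :=
  h.elim fun e => h'.elim fun e' => ⟨e.trans e'⟩
lemma isoSG_of_eq {p q : SG} (h : p = q) : isoSG p q := h ▸ isoSG_refl p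

/-- Complement iso. -/
def isoCompl {V W} {G : SimpleGraph V} {H : SimpleGraph W} (e : G ≃g H) : Gᶜ ≃g Hᶜ where
  toEquiv := e.toEquiv
  map_rel_iff' := by
    intro a b
    simp [SimpleGraph.compl_adj, e.map_rel_iff, ne_eq, EmbeddingLike.apply_eq_iff_eq]

/-! ### Basic lemmas -/

lemma leafCount_node (l : List PT) :
    PT.leafCount (.node l) = max 1 ((l.map PT.leafCount).sum) := by
  rw [PT.leafCount]
  exact congrArg (max 1) (congrArg List.sum (List.attach_map_val (l := l) (f := PT.leafCount)))

lemma leafCount_pos (t : PT) : 1 ≤ t.leafCount := by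
  cases t with | node l => rw [leafCount_node]; omega

lemma sum_leafCount_ge (l : List PT) : l.length ≤ (l.map PT.leafCount).sum := by
  induction l with
  | nil => simp
  | cons a l ih => simp only [List.map_cons, List.sum_cons, List.length_cons]
                   have := leafCount_pos a; omega

lemma leafCount_cons (a : PT) (l : List PT) :
    PT.leafCount (.node (a :: l)) = a.leafCount + (l.map PT.leafCount).sum := by
  rw [leafCount_node]
  have := leafCount_pos a
  simp only [List.map_cons, List.sum_cons]
  omega

lemma leafCount_single (a : PT) : PT.leafCount (.node [a]) = a.leafCount := by
  rw [leafCount_cons]; simp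

lemma gph_nil (s : Bool) : gph (.node []) s = ⟨PUnit, ⊥⟩ := by rw [gph]
lemma gph_single (a : PT) (s : Bool) : gph (.node [a]) s = gph a (!s) := by rw [gph]
lemma gph_cons (a b : PT) (l : List PT) (s : Bool) :
    gph (.node (a :: b :: l)) s = combine s (gph a (!s)) (gph (.node (b :: l)) s) := by rw [gph]

lemma gph_ne (t : PT) (s : Bool) : Nonempty (gph t s).1 := by
  cases t with
  | node l =>
    match l with
    | [] => rw [gph_nil]; exact ⟨PUnit.unit⟩
    | [a] => rw [gph_single]; exact gph_ne a (!s)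
    | a :: b :: l =>
      rw [gph_cons]
      exact (gph_ne a (!s)).elim fun x => ⟨Sum.inl x⟩
termination_by sizeOf t
decreasing_by all_goals simp <;> omega

lemma gph_finite (t : PT) (s : Bool) : Finite (gph t s).1 := by
  cases t with
  | node l =>
    match l with
    | [] => rw [gph_nil]; exact inferInstanceAs (Finite PUnit.{1})
    | [a] => rw [gph_single]; exact gph_finite a (!s)
    | a :: b :: l =>
      rw [gph_cons]
      have h1 := gph_finite a (!s)
      have h2 := gph_finite (.node (b :: l)) s
      haveI := h1; haveI := h2
      exact inferInstanceAs (Finite ((gph a (!s)).1 ⊕ (gph (.node (b :: l)) s).1))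
termination_by sizeOf t
decreasing_by all_goals simp <;> omega

lemma gph_card (t : PT) (s : Bool) : Nat.card (gph t s).1 = t.leafCount := by
  cases t with
  | node l =>
    match l with
    | [] => rw [gph_nil, leafCount_node]; simp
    | [a] => rw [gph_single, leafCount_single]; exact gph_card a (!s)
    | a :: b :: l =>
      rw [gph_cons]
      have h1 := gph_finite a (!s)
      have h2 := gph_finite (.node (b :: l)) s
      have : Nat.card ((gph a (!s)).1 ⊕ (gph (.node (b :: l)) s).1)
          = Nat.card (gph a (!s)).1 + Nat.card (gph (.node (b :: l)) s).1 := @Nat.card_sum _ _ h1 h2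
      show Nat.card ((gph a (!s)).1 ⊕ (gph (.node (b :: l)) s).1) = _
      rw [this, gph_card a (!s), gph_card (.node (b :: l)) s, leafCount_cons,
        leafCount_cons a (b :: l)]
      simp
termination_by sizeOf t
decreasing_by all_goals simp <;> omega

lemma sumG_compl {V W} (G : SimpleGraph V) (H : SimpleGraph W) :
    (sumG G H)ᶜ = joinG Gᶜ Hᶜ := by
  ext x y
  rcases x with a | a <;> rcases y with b | b <;>
    simp [SimpleGraph.compl_adj, sumG, joinG] <;> tauto

lemma joinG_compl {V W} (G : SimpleGraph V) (H : SimpleGraph W) :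
    (joinG G H)ᶜ = sumG Gᶜ Hᶜ := by
  ext x y
  rcases x with a | a <;> rcases y with b | b <;>
    simp [SimpleGraph.compl_adj, sumG, joinG] <;> tauto

lemma punit_bot_compl : (⊥ : SimpleGraph PUnit)ᶜ = ⊥ := by
  ext x y
  simp [SimpleGraph.compl_adj, Subsingleton.elim x y]

/-- Flipping the sign complements the graph. -/
lemma gph_not (t : PT) (s : Bool) : gph t (!s) = ⟨(gph t s).1, (gph t s).2ᶜ⟩ := by
  cases t with
  | node l =>
    match l with
    | [] => rw [gph_nil, gph_nil]; exact congrArg _ punit_bot_compl.symm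
    | [a] =>
      rw [gph_single, gph_single]
      exact gph_not a (!s)
    | a :: b :: l =>
      rw [gph_cons, gph_cons]
      have h1 : gph a (!(!s)) = ⟨(gph a (!s)).1, (gph a (!s)).2ᶜ⟩ := gph_not a (!s)
      have h2 := gph_not (.node (b :: l)) s
      rw [h1, h2]
      rcases s with _ | _ <;>
        simp [combine, sumG_compl, joinG_compl]
      · exact (sumG_compl _ _).symm
      · exact (joinG_compl _ _).symm
termination_by sizeOf t
decreasing_by all_goals simp <;> omega

/-! ### Iso combinators -/

def sumGCongr {V V' W W'} {G : SimpleGraph V} {G' : SimpleGraph V'} {H : SimpleGraph W}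
    {H' : SimpleGraph W'} (e₁ : G ≃g G') (e₂ : H ≃g H') : sumG G H ≃g sumG G' H' where
  toEquiv := Equiv.sumCongr e₁.toEquiv e₂.toEquiv
  map_rel_iff' := by
    rintro (a|a) (b|b) <;> simp [e₁.map_rel_iff, e₂.map_rel_iff]

def joinGCongr {V V' W W'} {G : SimpleGraph V} {G' : SimpleGraph V'} {H : SimpleGraph W}
    {H' : SimpleGraph W'} (e₁ : G ≃g G') (e₂ : H ≃g H') : joinG G H ≃g joinG G' H' where
  toEquiv := Equiv.sumCongr e₁.toEquiv e₂.toEquiv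
  map_rel_iff' := by
    rintro (a|a) (b|b) <;> simp [e₁.map_rel_iff, e₂.map_rel_iff]

lemma combineCongr {s : Bool} {p p' q q'} (h1 : isoSG p p') (h2 : isoSG q q') :
    isoSG (combine s p q) (combine s p' q') := by
  obtain ⟨e₁⟩ := h1; obtain ⟨e₂⟩ := h2
  cases s
  · exact ⟨sumGCongr e₁ e₂⟩
  · exact ⟨joinGCongr e₁ e₂⟩

def sumGComm {V W} (G : SimpleGraph V) (H : SimpleGraph W) : sumG G H ≃g sumG H G where
  toEquiv := Equiv.sumComm V W
  map_rel_iff' := by rintro (a|a) (b|b) <;> simp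

def joinGComm {V W} (G : SimpleGraph V) (H : SimpleGraph W) : joinG G H ≃g joinG H G where
  toEquiv := Equiv.sumComm V W
  map_rel_iff' := by rintro (a|a) (b|b) <;> simp

lemma combineComm (s : Bool) (p q : SG) : isoSG (combine s p q) (combine s q p) := by
  cases s
  · exact ⟨sumGComm _ _⟩
  · exact ⟨joinGComm _ _⟩

def sumGAssoc {U V W} (F : SimpleGraph U) (G : SimpleGraph V) (H : SimpleGraph W) :
    sumG F (sumG G H) ≃g sumG (sumG F G) H where
  toEquiv := (Equiv.sumAssoc U V W).symm
  map_rel_iff' := by rintro (a|b|c) (a'|b'|c') <;> simp [Equiv.sumAssoc, sumG]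

def joinGAssoc {U V W} (F : SimpleGraph U) (G : SimpleGraph V) (H : SimpleGraph W) :
    joinG F (joinG G H) ≃g joinG (joinG F G) H where
  toEquiv := (Equiv.sumAssoc U V W).symm
  map_rel_iff' := by rintro (a|b|c) (a'|b'|c') <;> simp [Equiv.sumAssoc, joinG]

lemma combineAssoc (s : Bool) (p q r : SG) :
    isoSG (combine s p (combine s q r)) (combine s (combine s p q) r) := by
  cases s
  · exact ⟨sumGAssoc _ _ _⟩
  · exact ⟨joinGAssoc _ _ _⟩

/-! ### Connectivity -/

lemma joinG_connected {V W} (G : SimpleGraph V) (H : SimpleGraph W)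
    (hV : Nonempty V) (hW : Nonempty W) : (joinG G H).Connected := by
  obtain ⟨v₀⟩ := hV; obtain ⟨w₀⟩ := hW
  rw [SimpleGraph.connected_iff]
  refine ⟨fun x y => ?_, ⟨Sum.inl v₀⟩⟩
  have key : ∀ a : V ⊕ W, (joinG G H).Reachable a (Sum.inl v₀) := by
    rintro (a | a)
    · by_cases h : a = v₀
      · subst h; exact SimpleGraph.Reachable.refl _
      · exact SimpleGraph.Reachable.trans
          (SimpleGraph.Adj.reachable (by simp : (joinG G H).Adj (.inl a) (.inr w₀)))
          (SimpleGraph.Adj.reachable (by simp))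
    · exact SimpleGraph.Adj.reachable (by simp)
  exact (key x).trans (key y).symm

lemma sumG_reachable_isLeft {V W} {G : SimpleGraph V} {H : SimpleGraph W} {x y : V ⊕ W}
    (h : (sumG G H).Reachable x y) : x.isLeft = y.isLeft := by
  obtain ⟨w⟩ := h
  induction w with
  | nil => rfl
  | cons hadj _ ih =>
    refine Eq.trans ?_ ih
    rename_i u v _ _
    rcases u with a|a <;> rcases v with b|b <;>
      first
      | rfl
      | exact absurd hadj (by simp)
      | simp_all [sumG]

lemma sumG_not_connected {V W} (G : SimpleGraph V) (H : SimpleGraph W)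
    (hV : Nonempty V) (hW : Nonempty W) : ¬ (sumG G H).Connected := by
  obtain ⟨v₀⟩ := hV; obtain ⟨w₀⟩ := hW
  intro h
  have := sumG_reachable_isLeft (h.preconnected (Sum.inl v₀) (Sum.inr w₀))
  simp at this

/-- The positive-sign graph of a good tree is connected. -/
lemma gph_connected (t : PT) (h : t.Good) : (gph t true).2.Connected := by
  cases t with
  | node l =>
    match l, h with
    | [], _ =>
      rw [gph_nil]
      rw [SimpleGraph.connected_iff]
      exact ⟨fun x y => by rw [Subsingleton.elim x y], ⟨PUnit.unit⟩⟩
    | [a], h => by_contra _h; rcases h with ⟨_, h1, _⟩; simp at h1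
    | a :: b :: l, _ =>
      rw [gph_cons]
      exact joinG_connected _ _ (gph_ne a false) (gph_ne (.node (b :: l)) true)

/-- The negative-sign graph of a tree with at least two children is not connected. -/
lemma gph_not_connected (a b : PT) (l : List PT) :
    ¬ (gph (.node (a :: b :: l)) false).2.Connected := by
  rw [gph_cons]
  exact sumG_not_connected _ _ (gph_ne a true) (gph_ne (.node (b :: l)) false)

/-! ### Sigma graphs -/

def sigmaSG {k : ℕ} (f : Fin k → SG) : SG :=
  ⟨(i : Fin k) × (f i).1,
   { Adj := fun x y => ∃ h : x.1 = y.1, ((f y.1).2).Adj (h ▸ x.2) y.2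
     symm := ⟨by
       rintro ⟨i, x⟩ ⟨j, y⟩ ⟨h, hadj⟩
       dsimp only at h
       subst h
       exact ⟨rfl, hadj.symm⟩⟩
     loopless := ⟨by
       rintro ⟨i, x⟩ ⟨h, hadj⟩
       exact ((f i).2).irrefl hadj⟩ }⟩

lemma sigmaSG_adj_mk {k} {f : Fin k → SG} {i : Fin k} {x y : (f i).1} :
    (sigmaSG f).2.Adj ⟨i, x⟩ ⟨i, y⟩ ↔ (f i).2.Adj x y := by
  constructor
  · rintro ⟨h, hadj⟩; exact hadj
  · intro h; exact ⟨rfl, h⟩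

lemma sigmaSG_adj_fst {k} {f : Fin k → SG} {x y : (sigmaSG f).1}
    (h : (sigmaSG f).2.Adj x y) : x.1 = y.1 := h.1

lemma sigmaSG_reachable_fst {k} {f : Fin k → SG} {x y : (sigmaSG f).1}
    (h : (sigmaSG f).2.Reachable x y) : x.1 = y.1 := by
  obtain ⟨w⟩ := h
  induction w with
  | nil => rfl
  | cons hadj _ ih => exact (sigmaSG_adj_fst hadj).trans ih

def sigmaSG_hom {k} (f : Fin k → SG) (i : Fin k) : (f i).2 →g (sigmaSG f).2 where
  toFun := fun a => ⟨i, a⟩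
  map_rel' := fun {a b} h =>
    show (sigmaSG f).2.Adj ⟨i, a⟩ ⟨i, b⟩ from sigmaSG_adj_mk.mpr h

lemma sigmaSG_reachable_lift {k} {f : Fin k → SG} {i : Fin k} {a b : (f i).1}
    (h : (f i).2.Reachable a b) :
    (sigmaSG f).2.Reachable ⟨i, a⟩ ⟨i, b⟩ := by
  have := h.map (sigmaSG_hom f i)
  exact this

lemma sigma_snd_cast {ι : Type} {V : ι → Type} (y : (i : ι) × V i) (j : ι) (h : y.1 = j) :
    (⟨j, h ▸ y.2⟩ : (i : ι) × V i) = y := by cases y; cases h; rfl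

lemma sigma_mk_snd_inj {ι : Type} {V : ι → Type} {j : ι} {u v : V j}
    (h : (⟨j, u⟩ : (i : ι) × V i) = ⟨j, v⟩) : u = v := sigma_mk_injective h

/-- Matching of connected components. -/
lemma match_sigma {k m : ℕ} (f : Fin k → SG) (g : Fin m → SG)
    (hf : ∀ i, (f i).2.Connected) (hg : ∀ j, (g j).2.Connected)
    (e : (sigmaSG f).2 ≃g (sigmaSG g).2) :
    ∃ σ : Fin k ≃ Fin m, ∀ i, isoSG (f i) (g (σ i)) := by
  classical
  have bf : ∀ i, (f i).1 := fun i => (hf i).nonempty.some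
  have bg : ∀ j, (g j).1 := fun j => (hg j).nonempty.some
  have wdE : ∀ (i : Fin k) (x y : (f i).1), (e ⟨i, x⟩).1 = (e ⟨i, y⟩).1 := by
    intro i x y
    have hr := sigmaSG_reachable_lift (f := f) (i := i) ((hf i).preconnected x y)
    exact sigmaSG_reachable_fst (hr.map e.toHom)
  have wdE' : ∀ (j : Fin m) (x y : (g j).1), (e.symm ⟨j, x⟩).1 = (e.symm ⟨j, y⟩).1 := by
    intro j x y
    have hr := sigmaSG_reachable_lift (f := g) (i := j) ((hg j).preconnected x y)
    exact sigmaSG_reachable_fst (hr.map e.symm.toHom)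
  set σfun : Fin k → Fin m := fun i => (e ⟨i, bf i⟩).1 with hσfun
  set τfun : Fin m → Fin k := fun j => (e.symm ⟨j, bg j⟩).1 with hτfun
  have li : ∀ i, τfun (σfun i) = i := by
    intro i
    have h1 : τfun (σfun i) = (e.symm ⟨(e ⟨i, bf i⟩).1, (e ⟨i, bf i⟩).2⟩).1 :=
      wdE' (e ⟨i, bf i⟩).1 _ _
    rw [h1]
    have h2 : (⟨(e ⟨i, bf i⟩).1, (e ⟨i, bf i⟩).2⟩ : (j : Fin m) × (g j).1) = e ⟨i, bf i⟩ := rfl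
    rw [h2]; exact congrArg Sigma.fst (e.symm_apply_apply _)
  have ri : ∀ j, σfun (τfun j) = j := by
    intro j
    have h1 : σfun (τfun j) = (e ⟨(e.symm ⟨j, bg j⟩).1, (e.symm ⟨j, bg j⟩).2⟩).1 :=
      wdE (e.symm ⟨j, bg j⟩).1 _ _
    rw [h1]
    have h2 : (⟨(e.symm ⟨j, bg j⟩).1, (e.symm ⟨j, bg j⟩).2⟩ : (i : Fin k) × (f i).1)
        = e.symm ⟨j, bg j⟩ := rfl
    rw [h2]; exact congrArg Sigma.fst (e.apply_symm_apply _)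
  refine ⟨⟨σfun, τfun, li, ri⟩, ?_⟩
  intro i
  have hx : ∀ x : (f i).1, (e ⟨i, x⟩).1 = σfun i := fun x => wdE i x (bf i)
  set F : (f i).1 → (g (σfun i)).1 := fun x => (hx x) ▸ (e ⟨i, x⟩).2 with hF
  have keyF : ∀ x, (⟨σfun i, F x⟩ : (j : Fin m) × (g j).1) = e ⟨i, x⟩ := fun x =>
    sigma_snd_cast (e ⟨i, x⟩) (σfun i) (hx x)
  have Finj : Function.Injective F := by
    intro x x' h
    have : e ⟨i, x⟩ = e ⟨i, x'⟩ := by rw [← keyF x, ← keyF x', h]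
    have := e.toEquiv.injective this
    exact sigma_mk_snd_inj this
  have Fsurj : Function.Surjective F := by
    intro y
    set w := e.symm ⟨σfun i, y⟩ with hw
    have hw1 : w.1 = i := by
      have h1 : w.1 = (e.symm ⟨σfun i, bg (σfun i)⟩).1 := wdE' (σfun i) y (bg (σfun i))
      rw [h1]; exact li i
    refine ⟨hw1 ▸ w.2, ?_⟩
    have h3 : (⟨i, hw1 ▸ w.2⟩ : (i' : Fin k) × (f i').1) = w := sigma_snd_cast w i hw1
    exact sigma_mk_snd_inj
      (show (⟨σfun i, F (hw1 ▸ w.2)⟩ : (j : Fin m) × (g j).1) = ⟨σfun i, y⟩ by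
        rw [keyF, h3, hw]; exact e.apply_symm_apply _)
  refine ⟨⟨Equiv.ofBijective F ⟨Finj, Fsurj⟩, ?_⟩⟩
  intro x x'
  show (g (σfun i)).2.Adj (F x) (F x') ↔ (f i).2.Adj x x'
  rw [← sigmaSG_adj_mk (f := g), keyF, keyF]; exact e.map_rel_iff.trans sigmaSG_adj_mk

/-! ### gph as a sigma graph -/

def sigmaOne (f : Fin 1 → SG) : (sigmaSG f).2 ≃g (f 0).2 where
  toEquiv :=
    { toFun := fun x => match x with | ⟨⟨0, _⟩, v⟩ => v
      invFun := fun v => ⟨0, v⟩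
      left_inv := by rintro ⟨⟨i, hi⟩, v⟩; match i, hi with | 0, _ => rfl
      right_inv := fun v => rfl }
  map_rel_iff' := by
    rintro ⟨⟨i, hi⟩, x⟩ ⟨⟨j, hj⟩, y⟩
    match i, hi, j, hj with
    | 0, hi, 0, hj => exact (sigmaSG_adj_mk (f := f) (i := ⟨0, hi⟩) (x := x) (y := y)).symm

def sigmaSuccIso {k : ℕ} (f : Fin (k + 1) → SG) :
    (sigmaSG f).2 ≃g sumG (f 0).2 (sigmaSG (f ∘ Fin.succ)).2 where
  toEquiv :=
    { toFun := fun x => match x with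
        | ⟨⟨0, _⟩, v⟩ => Sum.inl v
        | ⟨⟨j + 1, h⟩, v⟩ => Sum.inr ⟨⟨j, by omega⟩, v⟩
      invFun := fun x => match x with
        | Sum.inl v => ⟨0, v⟩
        | Sum.inr ⟨i, v⟩ => ⟨i.succ, v⟩
      left_inv := by rintro ⟨⟨i, hi⟩, v⟩; match i, hi with
        | 0, _ => rfl
        | j + 1, h => rfl
      right_inv := by rintro (v | ⟨⟨j, hj⟩, v⟩) <;> rfl }
  map_rel_iff' := by
    rintro ⟨⟨i, hi⟩, x⟩ ⟨⟨j, hj⟩, y⟩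
    match i, hi, j, hj with
    | 0, _, 0, _ =>
      show (sumG _ _).Adj (.inl x) (.inl y) ↔ _
      refine sumG_adj_inl_inl.trans ?_
      exact sigmaSG_adj_mk.symm.trans (Iff.rfl)
    | 0, _, j + 1, _ =>
      constructor
      · intro h; exact absurd h fun hh => hh
      · rintro ⟨h, _⟩; exact absurd (congrArg Fin.val h) (by simp)
    | i + 1, _, 0, _ =>
      constructor
      · intro h; exact absurd h fun hh => hh
      · rintro ⟨h, _⟩; exact absurd (congrArg Fin.val h) (by simp)
    | i + 1, hi, j + 1, hj =>
      show (sumG _ _).Adj (.inr _) (.inr _) ↔ _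
      refine sumG_adj_inr_inr.trans ?_
      constructor
      · rintro ⟨h, ha⟩
        have hij : i = j := by simpa using congrArg Fin.val h
        subst hij
        exact ⟨rfl, ha⟩
      · rintro ⟨h, ha⟩
        have hij : i = j := by simpa using congrArg Fin.val h
        subst hij
        exact ⟨rfl, ha⟩

lemma gph_sigma (a : PT) (l : List PT) :
    isoSG (gph (.node (a :: l)) false)
      (sigmaSG (fun i : Fin (a :: l).length => gph ((a :: l).get i) true)) := by
  induction l generalizing a with
  | nil =>
    rw [gph_single]
    exact ⟨(sigmaOne (fun i : Fin ([a].length) => gph ([a].get i) true)).symm⟩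
  | cons b l ih =>
    rw [gph_cons]
    have e₂ := sigmaSuccIso (fun i : Fin ((b :: l).length + 1) => gph ((a :: b :: l).get i) true)
    have hs : ((fun i : Fin ((b :: l).length + 1) => gph ((a :: b :: l).get i) true) ∘ Fin.succ)
        = (fun i : Fin (b :: l).length => gph ((b :: l).get i) true) := by
      funext i; rfl
    rw [hs] at e₂
    simp only [List.get_cons_zero] at e₂
    exact isoSG_trans (combineCongr (isoSG_refl (gph a true)) (ih b)) ⟨e₂.symm⟩

/-! ### Uniqueness -/

lemma finRange_map_perm {n m : ℕ} (σ : Fin n ≃ Fin m) :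
    ((List.finRange n).map σ).Perm (List.finRange m) := by
  classical
  rw [List.perm_iff_count]
  intro a
  have h1 : List.count a ((List.finRange n).map σ) = 1 := by
    conv_lhs => rw [← Equiv.apply_symm_apply σ a]
    rw [List.count_map_of_injective _ _ σ.injective]
    exact List.count_eq_one_of_mem (List.nodup_finRange n) (List.mem_finRange _)
  rw [h1]
  exact (List.count_eq_one_of_mem (List.nodup_finRange m) (List.mem_finRange a)).symm

lemma equiv_node_of_match {L L' : List PT} (σ : Fin L.length ≃ Fin L'.length)
    (h : ∀ i, PT.Equiv (L.get i) (L'.get (σ i))) : PT.Equiv (.node L) (.node L') := by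
  refine PT.Equiv.mk (l'' := List.ofFn (fun i => L'.get (σ i))) ?_ ?_
  · rw [List.forall₂_iff_get]
    refine ⟨by simp, ?_⟩
    intro i h1 h2
    rw [List.get_ofFn]
    exact h ⟨i, h1⟩
  · rw [List.ofFn_eq_map]
    conv_rhs => rw [← List.ofFn_get L', List.ofFn_eq_map]
    have : (List.finRange L.length).map (fun i => L'.get (σ i))
        = ((List.finRange L.length).map σ).map L'.get := by rw [List.map_map]; rfl
    rw [this]
    exact (finRange_map_perm σ).map L'.get

lemma good_children {l : List PT} (h : PT.Good (.node l)) : ∀ t ∈ l, PT.Good t := by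
  cases h; assumption

lemma good_len {l : List PT} (h : PT.Good (.node l)) : l = [] ∨ 2 ≤ l.length := by
  cases h; assumption

lemma leafCount_nil : PT.leafCount (.node []) = 1 := by rw [leafCount_node]; simp

lemma leafCount_two {a b : PT} {l : List PT} : 2 ≤ PT.leafCount (.node (a :: b :: l)) := by
  rw [leafCount_node]
  have := sum_leafCount_ge (a :: b :: l)
  simp only [List.length_cons] at this
  omega

lemma good_leafCount_one {t : PT} (hg : t.Good) (h : t.leafCount = 1) : t = .node [] := by
  cases t with
  | node l =>
    rcases good_len hg with h0 | h2
    · rw [h0]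
    · exfalso
      have := sum_leafCount_ge l
      rw [leafCount_node] at h
      omega

lemma gph_inj : ∀ (t u : PT), t.Good → u.Good → ∀ (s s' : Bool),
    isoSG (gph t s) (gph u s') → PT.Equiv t u ∧ (2 ≤ t.leafCount → s = s') := by
  intro t u ht hu s s' hiso
  have hcard : t.leafCount = u.leafCount := by
    obtain ⟨e⟩ := hiso
    rw [← gph_card t s, ← gph_card u s']
    exact Nat.card_congr e.toEquiv
  match t, u, ht, hu, hiso, hcard with
  | .node [], u, _, hu, _, hcard =>
    have hM : u = PT.node [] := by
      apply good_leafCount_one hu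
      rw [← hcard, leafCount_nil]
    subst hM
    refine ⟨PT.Equiv.mk List.Forall₂.nil (List.Perm.refl []), ?_⟩
    rw [leafCount_nil]; omega
  | .node [a], _, ht, _, _, _ => rcases good_len ht with h | h <;> simp at h
  | .node (a :: b :: L'), .node [], _, _, _, hcard =>
    have ht2 : 2 ≤ PT.leafCount (.node (a :: b :: L')) := leafCount_two
    rw [leafCount_nil] at hcard; omega
  | .node (a :: b :: L'), .node [m], _, hu, _, _ =>
    rcases good_len hu with h | h <;> simp at h
  | .node (a :: b :: L'), .node (m :: m' :: M'), ht, hu, hiso, hcard =>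
    have ht2 : 2 ≤ PT.leafCount (.node (a :: b :: L')) := leafCount_two
    -- the core argument for matched negative signs
    have core : isoSG (gph (.node (a :: b :: L')) false) (gph (.node (m :: m' :: M')) false) →
        PT.Equiv (.node (a :: b :: L')) (.node (m :: m' :: M')) := by
      intro hiso0
      have h1 := gph_sigma a (b :: L')
      have h2 := gph_sigma m (m' :: M')
      obtain ⟨e⟩ := isoSG_trans (isoSG_symm h1) (isoSG_trans hiso0 h2)
      have hf : ∀ i : Fin ((a :: b :: L').length),
          (gph ((a :: b :: L').get i) true).2.Connected := fun i =>
        gph_connected _ (good_children ht _ (List.get_mem _ _))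
      have hg : ∀ i : Fin ((m :: m' :: M').length),
          (gph ((m :: m' :: M').get i) true).2.Connected := fun i =>
        gph_connected _ (good_children hu _ (List.get_mem _ _))
      obtain ⟨σ, hσ⟩ := match_sigma _ _ hf hg e
      refine equiv_node_of_match σ ?_
      intro i
      have hga : PT.Good ((a :: b :: L').get i) := good_children ht _ (List.get_mem _ _)
      have hgm : PT.Good ((m :: m' :: M').get (σ i)) := good_children hu _ (List.get_mem _ _)
      have hlt : sizeOf ((a :: b :: L').get i) < sizeOf (PT.node (a :: b :: L')) := by
        have h1 := List.sizeOf_lt_of_mem (List.get_mem (a :: b :: L') ⟨i.1, i.2⟩)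
        have h3 : (a :: b :: L').get ⟨i.1, i.2⟩ = (a :: b :: L').get i := rfl
        rw [h3] at h1
        calc sizeOf ((a :: b :: L').get i) < sizeOf (a :: b :: L') := h1
          _ < sizeOf (PT.node (a :: b :: L')) := by
              rw [PT.node.sizeOf_spec]; omega
      exact (gph_inj _ _ hga hgm true true (hσ i)).1
    match s, s', hiso with
    | false, false, hiso => exact ⟨core hiso, fun _ => rfl⟩
    | true, true, hiso =>
      refine ⟨?_, fun _ => rfl⟩
      apply core
      obtain ⟨e⟩ := hiso
      have hL := gph_not (.node (a :: b :: L')) true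
      have hM := gph_not (.node (m :: m' :: M')) true
      have c1 : isoSG (⟨(gph (.node (a :: b :: L')) true).1, (gph (.node (a :: b :: L')) true).2ᶜ⟩ : SG)
          ⟨(gph (.node (m :: m' :: M')) true).1, (gph (.node (m :: m' :: M')) true).2ᶜ⟩ :=
        ⟨isoCompl e⟩
      exact isoSG_trans (isoSG_of_eq hL) (isoSG_trans c1 (isoSG_symm (isoSG_of_eq hM)))
    | false, true, hiso =>
      exfalso
      obtain ⟨e⟩ := hiso
      exact gph_not_connected a b L'
        ((SimpleGraph.Iso.connected_iff e).mpr (gph_connected _ hu))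
    | true, false, hiso =>
      exfalso
      obtain ⟨e⟩ := hiso
      exact gph_not_connected m m' M'
        ((SimpleGraph.Iso.connected_iff e).mp (gph_connected _ ht))
termination_by t => sizeOf t
decreasing_by exact hlt

/-! ### Equivalent trees give isomorphic graphs -/

lemma gph_list_congr (s : Bool) : ∀ (l l' : List PT),
    List.Forall₂ (fun a b => ∀ s', isoSG (gph a s') (gph b s')) l l' →
    isoSG (gph (.node l) s) (gph (.node l') s) := by
  intro l l' h
  induction l generalizing l' s with
  | nil =>
    rw [List.forall₂_nil_left_iff.mp h]
    exact isoSG_refl _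
  | cons a t ih =>
    obtain ⟨b, t', hab, htail, rfl⟩ := List.forall₂_cons_left_iff.mp h
    match t, t', htail with
    | [], t', htail =>
      rw [List.forall₂_nil_left_iff.mp htail]
      rw [gph_single, gph_single]
      exact hab (!s)
    | x :: xs, t', htail =>
      obtain ⟨y, ys, _, _, rfl⟩ := List.forall₂_cons_left_iff.mp htail
      rw [gph_cons, gph_cons]
      exact combineCongr (hab (!s)) (ih s _ htail)

lemma gph_perm (s : Bool) : ∀ (l l' : List PT), l.Perm l' →
    isoSG (gph (.node l) s) (gph (.node l') s) := by
  intro l l' h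
  induction h with
  | nil => exact isoSG_refl _
  | @cons x t t' h ih =>
    match t, t', h with
    | [], t', h =>
      rw [← h.nil_eq]
      exact isoSG_refl _
    | a :: t₀, t', h =>
      match t', h with
      | [], h => exact absurd h.length_eq (by simp)
      | b :: t₀', h =>
        rw [gph_cons, gph_cons]
        exact combineCongr (isoSG_refl _) ih
  | @swap x y t =>
    match t with
    | [] =>
      rw [gph_cons, gph_cons, gph_single, gph_single]
      exact combineComm s _ _
    | a :: t₀ =>
      rw [gph_cons, gph_cons, gph_cons, gph_cons]
      refine isoSG_trans (combineAssoc s _ _ _) (isoSG_trans ?_ (isoSG_symm (combineAssoc s _ _ _)))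
      exact combineCongr (combineComm s _ _) (isoSG_refl _)
  | trans h1 h2 ih1 ih2 => exact isoSG_trans ih1 ih2

lemma gph_equiv : ∀ (t u : PT), PT.Equiv t u → ∀ s, isoSG (gph t s) (gph u s) := by
  intro t u h s
  cases h with
  | @mk l l' l'' hf hp =>
    have hf' : List.Forall₂ (fun a b => ∀ s', isoSG (gph a s') (gph b s')) l l'' := by
      rw [List.forall₂_iff_get] at hf ⊢
      refine ⟨hf.1, ?_⟩
      intro i h1 h2
      have hlt : sizeOf (l.get ⟨i, h1⟩) < sizeOf (PT.node l) := by
        have := List.sizeOf_lt_of_mem (List.get_mem l ⟨i, h1⟩)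
        rw [PT.node.sizeOf_spec]; omega
      exact fun s' => gph_equiv _ _ (hf.2 i h1 h2) s'
    exact isoSG_trans (gph_list_congr s l l'' hf') (gph_perm s l'' l' hp)
termination_by t => sizeOf t
decreasing_by exact hlt

/-! ### Realization -/

def botIso : (⊥ : SimpleGraph PUnit) ≃g (⊥ : SimpleGraph (Fin 1)) where
  toEquiv := Equiv.ofUnique PUnit (Fin 1)
  map_rel_iff' := by simp

def sumG_iso_disjUnion {V W : Type} {m n : ℕ} {A : SimpleGraph V} {B : SimpleGraph W}
    {H₁ : SimpleGraph (Fin m)} {H₂ : SimpleGraph (Fin n)}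
    (e₁ : A ≃g H₁) (e₂ : B ≃g H₂) : sumG A B ≃g disjUnionGraph H₁ H₂ where
  toEquiv := (Equiv.sumCongr e₁.toEquiv e₂.toEquiv).trans finSumFinEquiv
  map_rel_iff' := by
    rintro (a|a) (b|b) <;>
      simp [disjUnionGraph, SimpleGraph.map_adj, e₁.map_rel_iff, e₂.map_rel_iff,
        Function.Embedding.inl_apply, Function.Embedding.inr_apply]

lemma leafCount_cons₂ (a b : PT) (l : List PT) :
    PT.leafCount (.node (a :: b :: l)) = a.leafCount + PT.leafCount (.node (b :: l)) := by
  rw [leafCount_cons a (b :: l), leafCount_cons b l]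
  simp

lemma realize : ∀ (t : PT), ∃ (G₀ G₁ : SimpleGraph (Fin t.leafCount)),
    IsCograph G₀ ∧ IsCograph G₁ ∧
    Nonempty ((gph t false).2 ≃g G₀) ∧ Nonempty ((gph t true).2 ≃g G₁) := by
  intro t
  match t with
  | .node [] =>
    rw [leafCount_nil, gph_nil, gph_nil]
    exact ⟨⊥, ⊥, IsCograph.single, IsCograph.single, ⟨botIso⟩, ⟨botIso⟩⟩
  | .node [a] =>
    obtain ⟨G₀, G₁, h₀, h₁, e₀, e₁⟩ := realize a
    rw [leafCount_single, gph_single, gph_single]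
    exact ⟨G₁, G₀, h₁, h₀, e₁, e₀⟩
  | .node (a :: b :: l) =>
    obtain ⟨A₀, A₁, ha₀, ha₁, ea₀, ea₁⟩ := realize a
    obtain ⟨B₀, B₁, hb₀, hb₁, eb₀, eb₁⟩ := realize (.node (b :: l))
    rw [leafCount_cons₂]
    obtain ⟨ea₁'⟩ := ea₁
    obtain ⟨eb₀'⟩ := eb₀
    refine ⟨disjUnionGraph A₁ B₀, (disjUnionGraph A₁ B₀)ᶜ,
      IsCograph.union ha₁ hb₀, IsCograph.compl (IsCograph.union ha₁ hb₀), ⟨?_⟩, ?_⟩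
    · rw [gph_cons]
      exact sumG_iso_disjUnion ea₁' eb₀'
    · have hcompl := gph_not (.node (a :: b :: l)) false
      have base : (gph (.node (a :: b :: l)) false).2 ≃g disjUnionGraph A₁ B₀ := by
        rw [gph_cons]
        exact sumG_iso_disjUnion ea₁' eb₀'
      have : isoSG (gph (.node (a :: b :: l)) true)
          ⟨Fin (a.leafCount + PT.leafCount (.node (b :: l))), (disjUnionGraph A₁ B₀)ᶜ⟩ :=
        isoSG_trans (isoSG_of_eq hcompl) ⟨isoCompl base⟩
      exact this
termination_by t => sizeOf t
decreasing_by all_goals simp <;> omega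

/-! ### Existence of a cotree -/

def parts : PT → Bool → List PT
  | .node (x :: xs), false => x :: xs
  | t, _ => [t]

lemma parts_ne (t : PT) (s : Bool) : parts t s ≠ [] := by
  obtain ⟨l⟩ := t
  match l, s with
  | x :: xs, false => simp [parts]
  | [], false => simp [parts]
  | l, true => simp [parts]

lemma parts_good {t : PT} (h : t.Good) (s : Bool) : ∀ x ∈ parts t s, x.Good := by
  obtain ⟨l⟩ := t
  match l, s with
  | x :: xs, false =>
    intro y hy
    exact good_children h y hy
  | [], false => intro y hy; simp [parts] at hy; subst hy; exact h
  | l, true => intro y hy; simp [parts] at hy; subst hy; exact h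

lemma parts_iso (t : PT) (s : Bool) : isoSG (gph (.node (parts t s)) false) (gph t s) := by
  obtain ⟨l⟩ := t
  match l, s with
  | x :: xs, false => exact isoSG_refl _
  | [], false =>
    show isoSG (gph (.node [.node []]) false) _
    rw [gph_single]
    exact isoSG_of_eq (by rw [gph_nil, gph_nil])
  | [], true =>
    rw [show parts (PT.node []) true = [PT.node []] from rfl, gph_single]
    exact isoSG_refl _
  | x :: xs, true =>
    rw [show parts (PT.node (x :: xs)) true = [PT.node (x :: xs)] from rfl, gph_single]
    exact isoSG_refl _

lemma gph_append : ∀ (P₁ P₂ : List PT), P₁ ≠ [] → P₂ ≠ [] →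
    isoSG (gph (.node (P₁ ++ P₂)) false)
      ⟨(gph (.node P₁) false).1 ⊕ (gph (.node P₂) false).1,
        sumG (gph (.node P₁) false).2 (gph (.node P₂) false).2⟩ := by
  intro P₁ P₂ h1 h2
  match P₁, P₂ with
  | [x], y :: ys =>
    simp only [List.cons_append, List.nil_append]
    rw [gph_cons, gph_single]
    exact isoSG_refl _
  | x :: x' :: xs, y :: ys =>
    have ih := gph_append (x' :: xs) (y :: ys) (by simp) (by simp)
    simp only [List.cons_append] at ih ⊢
    rw [gph_cons]
    refine isoSG_trans (combineCongr (isoSG_refl (gph x true)) ih) ?_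
    refine isoSG_trans (combineAssoc false (gph x true) (gph (.node (x' :: xs)) false)
      (gph (.node (y :: ys)) false)) ?_
    rw [gph_cons]
    exact isoSG_refl _

lemma exists_tree {k : ℕ} (G : SimpleGraph (Fin k)) (h : IsCograph G) :
    ∃ (s : Bool) (t : PT), t.Good ∧ isoSG (gph t s) ⟨Fin k, G⟩ := by
  induction h with
  | single =>
    exact ⟨false, .node [], PT.Good.node [] (Or.inl rfl) (by simp),
      ⟨by rw [gph_nil]; exact botIso⟩⟩
  | @compl n G hG ih =>
    obtain ⟨s, t, hg, hiso⟩ := ih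
    obtain ⟨e⟩ := hiso
    exact ⟨!s, t, hg, isoSG_trans (isoSG_of_eq (gph_not t s)) ⟨isoCompl e⟩⟩
  | @union m n G₁ G₂ h1 h2 ih1 ih2 =>
    obtain ⟨s₁, t₁, hg₁, hiso₁⟩ := ih1
    obtain ⟨s₂, t₂, hg₂, hiso₂⟩ := ih2
    refine ⟨false, .node (parts t₁ s₁ ++ parts t₂ s₂), ?_, ?_⟩
    · refine PT.Good.node _ (Or.inr ?_) ?_
      · rw [List.length_append]
        have p1 := List.length_pos_iff.mpr (parts_ne t₁ s₁)
        have p2 := List.length_pos_iff.mpr (parts_ne t₂ s₂)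
        omega
      · intro x hx
        rcases List.mem_append.mp hx with hx | hx
        · exact parts_good hg₁ s₁ x hx
        · exact parts_good hg₂ s₂ x hx
    · refine isoSG_trans (gph_append _ _ (parts_ne t₁ s₁) (parts_ne t₂ s₂)) ?_
      obtain ⟨f₁⟩ := isoSG_trans (parts_iso t₁ s₁) hiso₁
      obtain ⟨f₂⟩ := isoSG_trans (parts_iso t₂ s₂) hiso₂
      exact ⟨sumG_iso_disjUnion f₁ f₂⟩

/-! ### Final assembly -/

lemma realizeN (t : PT) (s : Bool) {n : ℕ} (h : t.leafCount = n) :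
    ∃ G : SimpleGraph (Fin n), IsCograph G ∧ Nonempty ((gph t s).2 ≃g G) := by
  subst h
  obtain ⟨G₀, G₁, h₀, h₁, e₀, e₁⟩ := realize t
  cases s
  · exact ⟨G₀, h₀, e₀⟩
  · exact ⟨G₁, h₁, e₁⟩

/-- For `n ≥ 2`, the number of unlabelled cographs on `n` vertices is twice the number
of unlabelled unordered rooted trees with `n` leaves whose internal vertices all have
outdegree at least 2. -/
theorem cographCount_eq_two_mul_treeCount (n : ℕ) (hn : 2 ≤ n) :
    cographCount n = 2 * treeCount n := by
  classical
  set S := {t : PT // t.Good ∧ t.leafCount = n} with hS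
  set rT : S → S → Prop := fun s t => PT.Equiv s.1 t.1 with hrT
  set C := {G : SimpleGraph (Fin n) // IsCograph G} with hC
  set rC : C → C → Prop := fun G H => Nonempty (G.1 ≃g H.1) with hrC
  have rCequiv : Equivalence rC :=
    ⟨fun G => ⟨RelIso.refl _⟩, fun h => h.elim fun e => ⟨e.symm⟩,
     fun h h' => h.elim fun e => h'.elim fun e' => ⟨e.trans e'⟩⟩
  -- the chosen representative graph
  have pick : ∀ (s : Bool) (t : S), ∃ G : C, Nonempty ((gph t.1 s).2 ≃g G.1) := by
    intro s t
    obtain ⟨G, hG, e⟩ := realizeN t.1 s t.2.2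
    exact ⟨⟨G, hG⟩, e⟩
  choose pickG pickSpec using pick
  -- the map
  have resp : ∀ (s : Bool) (t t' : S), rT t t' →
      (Quot.mk rC (pickG s t) : Quot rC) = Quot.mk rC (pickG s t') := by
    intro s t t' h
    apply Quot.sound
    obtain ⟨e⟩ := pickSpec s t
    obtain ⟨e'⟩ := pickSpec s t'
    obtain ⟨f⟩ := gph_equiv t.1 t'.1 h s
    exact ⟨(e.symm.trans f).trans e'⟩
  let Φ : Bool × Quot rT → Quot rC := fun p =>
    Quot.lift (fun t => Quot.mk rC (pickG p.1 t)) (resp p.1) p.2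
  have Φinj : Function.Injective Φ := by
    rintro ⟨s, qt⟩ ⟨s', qt'⟩ h
    induction qt using Quot.ind with | _ t =>
    induction qt' using Quot.ind with | _ t' =>
    have h' : (Quot.mk rC (pickG s t) : Quot rC) = Quot.mk rC (pickG s' t') := h
    have hrel : rC (pickG s t) (pickG s' t') :=
      (rCequiv.eqvGen_iff).mp (Quot.eq.mp h')
    obtain ⟨e⟩ := hrel
    obtain ⟨e₁⟩ := pickSpec s t
    obtain ⟨e₂⟩ := pickSpec s' t'
    have hiso : isoSG (gph t.1 s) (gph t'.1 s') := ⟨(e₁.trans e).trans e₂.symm⟩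
    obtain ⟨hequiv, hsign⟩ := gph_inj t.1 t'.1 t.2.1 t'.2.1 s s' hiso
    have hs : s = s' := hsign (by rw [t.2.2]; exact hn)
    subst hs
    have : (Quot.mk rT t : Quot rT) = Quot.mk rT t' := Quot.sound hequiv
    rw [Prod.mk.injEq]
    exact ⟨rfl, this⟩
  have Φsurj : Function.Surjective Φ := by
    intro qc
    induction qc using Quot.ind with | _ c =>
    obtain ⟨s, t, hg, hiso⟩ := exists_tree c.1 c.2
    obtain ⟨e⟩ := hiso
    have hlc : t.leafCount = n := by
      rw [← gph_card t s]
      have := Nat.card_congr e.toEquiv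
      simpa [Nat.card_eq_fintype_card] using this
    refine ⟨(s, Quot.mk rT ⟨t, hg, hlc⟩), ?_⟩
    show (Quot.mk rC (pickG s ⟨t, hg, hlc⟩) : Quot rC) = Quot.mk rC c
    apply Quot.sound
    obtain ⟨e₁⟩ := pickSpec s ⟨t, hg, hlc⟩
    exact ⟨(e₁.symm.trans e : (pickG s ⟨t, hg, hlc⟩).1 ≃g c.1)⟩
  have hbij : Function.Bijective Φ := ⟨Φinj, Φsurj⟩
  have hcount : Nat.card (Bool × Quot rT) = Nat.card (Quot rC) :=
    Nat.card_eq_of_bijective Φ hbij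
  have : cographCount n = Nat.card (Quot rC) := rfl
  rw [this, ← hcount, Nat.card_prod]
  have hb : Nat.card Bool = 2 := by simp [Nat.card_eq_fintype_card]
  rw [hb]
  rfl
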